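/- Let (G, S) be a rooted graph with μ(G, S) ≤ 1 such that G contains an S-cycle H-subdivision W for some graph H. Let T ⊆ V(W) be such that G − T has no S-cycle intersecting W in at most one vertex and G − T contains no W-extension. If G − T has no S-cycle containing a vertex of S ∩ V(W), then T is an S-cycle hitting set of G. -/

import Mathlib

open scoped Classical

/-- A finite multigraph (possibly with loops and parallel edges), with vertices and
edges labelled by natural numbers. `ends e` gives the (unordered) pair of endpoints. -/
structure Multigraph where
  verts : Finset ℕ
  edges : Finset ℕ
  ends : ℕ → Sym2 ℕ
  ends_mem : ∀ e ∈ edges, ∀ x ∈ ends e, x ∈ verts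

namespace Multigraph

/-- `W` is a subgraph of `G`. -/
def IsSubgraph (W G : Multigraph) : Prop :=
  W.verts ⊆ G.verts ∧ W.edges ⊆ G.edges ∧ ∀ e ∈ W.edges, W.ends e = G.ends e

/-- Delete a set of vertices (and all incident edges). -/
noncomputable def deleteVerts (G : Multigraph) (T : Finset ℕ) : Multigraph where
  verts := G.verts \ T
  edges := G.edges.filter (fun e => ∀ x ∈ G.ends e, x ∉ T)
  ends := G.ends
  ends_mem := by
    intro e he x hx
    rw [Finset.mem_filter] at he
    rw [Finset.mem_sdiff]
    exact ⟨G.ends_mem e he.1 x hx, he.2 x hx⟩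

/-- Delete a set of edges. -/
def deleteEdges (G : Multigraph) (X : Finset ℕ) : Multigraph where
  verts := G.verts
  edges := G.edges \ X
  ends := G.ends
  ends_mem := fun e he x hx => G.ends_mem e (Finset.mem_sdiff.mp he).1 x hx

/-- Union of two multigraphs. -/
noncomputable def union (W X : Multigraph) : Multigraph where
  verts := W.verts ∪ X.verts
  edges := W.edges ∪ X.edges
  ends := fun e => if e ∈ W.edges then W.ends e else X.ends e
  ends_mem := by
    intro e he x hx
    rw [Finset.mem_union] at he ⊢
    by_cases h : e ∈ W.edges
    · simp only [h, if_true] at hx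
      exact Or.inl (W.ends_mem e h x hx)
    · simp only [h, if_false] at hx
      exact Or.inr (X.ends_mem e (he.resolve_left h) x hx)

/-- The degree of a vertex in a multigraph; a loop contributes 2. -/
noncomputable def degree (W : Multigraph) (v : ℕ) : ℕ :=
  ∑ e ∈ W.edges, (if W.ends e = s(v, v) then 2 else if v ∈ W.ends e then 1 else 0)

/-- `vs = [v₀, …, vₙ]`, `es = [e₁, …, eₙ]` form a walk in `G`
(the `i`-th edge joins the `i`-th and `(i+1)`-st vertices). -/
def IsWalk (G : Multigraph) (vs es : List ℕ) : Prop :=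
  vs.length = es.length + 1 ∧
  (∀ v ∈ vs, v ∈ G.verts) ∧
  (∀ e ∈ es, e ∈ G.edges) ∧
  ∀ i, i < es.length → G.ends (es.getD i 0) = s(vs.getD i 0, vs.getD (i + 1) 0)

/-- `C` is a cycle of `G`: a subgraph of `G` consisting of (cyclically ordered) distinct
vertices `vs` and distinct edges `es`, the `i`-th edge joining consecutive vertices.
Loops and pairs of parallel edges count as cycles. -/
def IsCycleOf (G C : Multigraph) : Prop :=
  C.IsSubgraph G ∧
  ∃ vs es : List ℕ, vs.Nodup ∧ es.Nodup ∧ es ≠ [] ∧ vs.length = es.length ∧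
    C.verts = vs.toFinset ∧ C.edges = es.toFinset ∧
    ∀ i, i < es.length →
      C.ends (es.getD i 0) = s(vs.getD i 0, vs.getD ((i + 1) % vs.length) 0)

/-- An S-cycle of `(G, S)`: a cycle of `G` containing a vertex of `S`. -/
def IsSCycle (G : Multigraph) (S : Finset ℕ) (C : Multigraph) : Prop :=
  IsCycleOf G C ∧ (C.verts ∩ S).Nonempty

/-- `μ(G, S) ≤ 1`: there are no two vertex-disjoint S-cycles. -/
def MuLeOne (G : Multigraph) (S : Finset ℕ) : Prop :=
  ∀ C₁ C₂, IsSCycle G S C₁ → IsSCycle G S C₂ → ¬ Disjoint C₁.verts C₂.verts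

/-- `T` is an S-cycle hitting set of `(G, S)`. -/
def IsHittingSet (G : Multigraph) (S T : Finset ℕ) : Prop :=
  T ⊆ G.verts ∧ ∀ C, IsSCycle G S C → (C.verts ∩ T).Nonempty

/-- `τ(G, S) ≤ k`. -/
def TauLe (G : Multigraph) (S : Finset ℕ) (k : ℕ) : Prop :=
  ∃ T, IsHittingSet G S T ∧ T.card ≤ k

/-- `P` is a path graph with vertex list `vs` and edge list `es`. -/
def IsPathGraph (P : Multigraph) (vs es : List ℕ) : Prop :=
  vs.Nodup ∧ es.Nodup ∧ vs.length = es.length + 1 ∧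
  P.verts = vs.toFinset ∧ P.edges = es.toFinset ∧
  ∀ i, i < es.length → P.ends (es.getD i 0) = s(vs.getD i 0, vs.getD (i + 1) 0)

/-- `P` (with vertex list `vs` and edge list `es`) is a `W`-path in `G`:
a path with at least one edge, both endpoints in `W`, internal vertices outside `W`,
and using no edge of `W`. -/
def IsWPathList (G W P : Multigraph) (vs es : List ℕ) : Prop :=
  P.IsSubgraph G ∧ IsPathGraph P vs es ∧ es ≠ [] ∧
  vs.getD 0 0 ∈ W.verts ∧ vs.getD (vs.length - 1) 0 ∈ W.verts ∧
  (∀ i, 0 < i → i < vs.length - 1 → vs.getD i 0 ∉ W.verts) ∧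
  (∀ e ∈ es, e ∉ W.edges)

/-- `P` is a `W`-path in `G`. -/
def IsWPath (G W P : Multigraph) : Prop :=
  ∃ vs es, IsWPathList G W P vs es

/-- `P` is a `(W, F₁, F₂)`-path in `G`: a `W`-path with one endpoint in `F₁`
and the other in `F₂`. -/
def IsWPathBtw (G W P : Multigraph) (F₁ F₂ : Finset ℕ) : Prop :=
  ∃ vs es, IsWPathList G W P vs es ∧
    ((vs.getD 0 0 ∈ F₁ ∧ vs.getD (vs.length - 1) 0 ∈ F₂) ∨
     (vs.getD 0 0 ∈ F₂ ∧ vs.getD (vs.length - 1) 0 ∈ F₁))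

/-- `W` is an S-cycle subgraph of `(G, S)`: a subgraph whose every cycle is an S-cycle. -/
def IsSCycleSubgraph (G : Multigraph) (S : Finset ℕ) (W : Multigraph) : Prop :=
  W.IsSubgraph G ∧ ∀ C, IsCycleOf W C → (C.verts ∩ S).Nonempty

/-- `X` is a `W`-extension: a `W`-path such that `W ∪ X` is an S-cycle subgraph. -/
def IsWExtension (G : Multigraph) (S : Finset ℕ) (W X : Multigraph) : Prop :=
  IsWPath G W X ∧ IsSCycleSubgraph G S (W.union X)

/-- `G` is connected. -/
def Connected (G : Multigraph) : Prop :=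
  G.verts.Nonempty ∧
  ∀ u ∈ G.verts, ∀ v ∈ G.verts,
    ∃ vs es, IsWalk G vs es ∧ vs ≠ [] ∧ vs.getD 0 0 = u ∧ vs.getD (vs.length - 1) 0 = v

/-- `G` has no cycles. -/
def Acyclic (G : Multigraph) : Prop := ¬ ∃ C, IsCycleOf G C

/-- `X` separates the vertex sets `A` and `B` in `G`: after deleting `X`, there is no
walk from a vertex of `A` to a vertex of `B`. -/
def Separates (G : Multigraph) (X A B : Finset ℕ) : Prop :=
  ¬ ∃ vs es, IsWalk (G.deleteVerts X) vs es ∧ vs ≠ [] ∧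
      vs.getD 0 0 ∈ A ∧ vs.getD (vs.length - 1) 0 ∈ B

/-- `G` is a subdivision of `H`: each edge `e` of `H` is replaced by a path
(given by vertex list `pv e` and edge list `pe e`) between the images of its
endpoints under an injection `φ`; the paths are internally disjoint from each
other and from the branching vertices, and together they cover `G` exactly. -/
def IsSubdivisionOf (H G : Multigraph) : Prop :=
  ∃ (φ : ℕ → ℕ) (pv pe : ℕ → List ℕ),
    Set.InjOn φ ↑H.verts ∧
    (∀ v ∈ H.verts, φ v ∈ G.verts) ∧
    (∀ e ∈ H.edges,
      IsWalk G (pv e) (pe e) ∧ pe e ≠ [] ∧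
      (pv e).dropLast.Nodup ∧ (pv e).tail.Nodup ∧
      (∃ u v, H.ends e = s(u, v) ∧ (pv e).getD 0 0 = φ u ∧
        (pv e).getD ((pv e).length - 1) 0 = φ v) ∧
      (∀ x ∈ (pv e).tail.dropLast, ∀ w ∈ H.verts, x ≠ φ w)) ∧
    (∀ e ∈ H.edges, ∀ f ∈ H.edges, e ≠ f →
      (∀ x ∈ (pv e).tail.dropLast, x ∉ (pv f).toFinset) ∧
      (∀ a ∈ pe e, a ∉ pe f)) ∧
    G.verts = H.verts.image φ ∪ H.edges.biUnion (fun e => (pv e).toFinset) ∧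
    G.edges = H.edges.biUnion (fun e => (pe e).toFinset)

/-- `W` is an S-cycle `H`-subdivision in `(G, S)`: a subgraph of `G` that is a
subdivision of `H` and in which every cycle is an S-cycle. -/
def IsSCycleSubdivision (G : Multigraph) (S : Finset ℕ) (H W : Multigraph) : Prop :=
  W.IsSubgraph G ∧ IsSubdivisionOf H W ∧ ∀ C, IsCycleOf W C → (C.verts ∩ S).Nonempty

/-- Build a multigraph on vertex set `{0, …, n-1}` whose edges are `0, …, l.length - 1`,
with the `i`-th edge joining the pair `l[i]`. -/
def mkGraph (n : ℕ) (l : List (ℕ × ℕ)) (h : ∀ p ∈ l, p.1 < n ∧ p.2 < n) : Multigraph where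
  verts := Finset.range n
  edges := Finset.range l.length
  ends := fun e => s((l.getD e (0, 0)).1, (l.getD e (0, 0)).2)
  ends_mem := by
    intro e he x hx
    rw [Finset.mem_range] at he
    have hm : l.getD e (0, 0) ∈ l := by
      rw [List.getD_eq_getElem l (0, 0) he]
      exact List.getElem_mem he
    rw [Sym2.mem_iff] at hx
    rw [Finset.mem_range]
    rcases hx with h1 | h2
    · exact h1 ▸ (h _ hm).1
    · exact h2 ▸ (h _ hm).2

/-- `θ₃`: two vertices joined by three parallel edges. -/
def theta3 : Multigraph := mkGraph 2 [(0,1),(0,1),(0,1)] (by decide)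

/-- `K₃⁺`: the triangle with a parallel edge added to each of two distinct edges. -/
def K3plus : Multigraph := mkGraph 3 [(0,1),(1,2),(2,0),(0,1),(1,2)] (by decide)

/-- `K₃⁺⁺⁺`: the triangle with a parallel edge added to every edge and one further
parallel edge added to one edge. -/
def K3ppp : Multigraph := mkGraph 3 [(0,1),(1,2),(2,0),(0,1),(1,2),(2,0),(0,1)] (by decide)

/-- The complete graph `K₄`. -/
def K4 : Multigraph := mkGraph 4 [(0,1),(0,2),(0,3),(1,2),(1,3),(2,3)] (by decide)

/-- `K₄⁺⁺`: `K₄` with a parallel edge added to each of two incident edges. -/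
def K4pp : Multigraph := mkGraph 4 [(0,1),(0,2),(0,3),(1,2),(1,3),(2,3),(0,1),(0,2)] (by decide)

/-- `K₄⁺⁺⁺`: `K₄` with two parallel edges added to one edge. -/
def K4ppp : Multigraph := mkGraph 4 [(0,1),(0,2),(0,3),(1,2),(1,3),(2,3),(0,1),(0,1)] (by decide)

/-- The wheel `W₄`: a 4-cycle `0123` plus a hub `4` joined to all rim vertices. -/
def W4 : Multigraph := mkGraph 5 [(0,1),(1,2),(2,3),(3,0),(4,0),(4,1),(4,2),(4,3)] (by decide)

/-- `W₄⁺`: `W₄` with a parallel edge added between the hub and one rim vertex. -/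
def W4plus : Multigraph :=
  mkGraph 5 [(0,1),(1,2),(2,3),(3,0),(4,0),(4,1),(4,2),(4,3),(4,0)] (by decide)

/-- `W₄*`: `W₄` with an edge added between two rim vertices at distance 2. -/
def W4star : Multigraph :=
  mkGraph 5 [(0,1),(1,2),(2,3),(3,0),(4,0),(4,1),(4,2),(4,3),(0,2)] (by decide)

/-- The wheel `W₅`: a 5-cycle plus a hub joined to all rim vertices. -/
def W5 : Multigraph :=
  mkGraph 6 [(0,1),(1,2),(2,3),(3,4),(4,0),(5,0),(5,1),(5,2),(5,3),(5,4)] (by decide)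

/-- The complete bipartite graph `K₃,₃` with parts `{0,1,2}` and `{3,4,5}`. -/
def K33 : Multigraph :=
  mkGraph 6 [(0,3),(0,4),(0,5),(1,3),(1,4),(1,5),(2,3),(2,4),(2,5)] (by decide)

/-- `K₃,₃⁺`: `K₃,₃` with an edge added between two vertices in the same part. -/
def K33plus : Multigraph :=
  mkGraph 6 [(0,3),(0,4),(0,5),(1,3),(1,4),(1,5),(2,3),(2,4),(2,5),(0,1)] (by decide)

end Multigraph
namespace CycProof
open Multigraph

lemma getD' (l : List ℕ) {i : ℕ} (h : i < l.length) : l.getD i 0 = l[i] :=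
  List.getD_eq_getElem l 0 h

lemma getD_mem {l : List ℕ} {i : ℕ} (h : i < l.length) : l.getD i 0 ∈ l.toFinset := by
  rw [getD' l h]; exact List.mem_toFinset.2 (l.getElem_mem h)

lemma exists_getD {l : List ℕ} {x : ℕ} (h : x ∈ l.toFinset) :
    ∃ i, i < l.length ∧ l.getD i 0 = x := by
  rcases List.mem_iff_getElem.1 (List.mem_toFinset.1 h) with ⟨i, hi, he⟩
  exact ⟨i, hi, by rw [getD' l hi]; exact he⟩

lemma getD_inj {l : List ℕ} (h : l.Nodup) {i j : ℕ} (hi : i < l.length) (hj : j < l.length)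
    (he : l.getD i 0 = l.getD j 0) : i = j := by
  rw [getD' l hi, getD' l hj] at he
  exact (List.Nodup.getElem_inj_iff h).mp he

lemma getD_rotate (l : List ℕ) (r : ℕ) {i : ℕ} (h : i < l.length) :
    (l.rotate r).getD i 0 = l.getD ((i + r) % l.length) 0 := by
  have h1 : i < (l.rotate r).length := by simpa using h
  have h2 : (i + r) % l.length < l.length := Nat.mod_lt _ (by omega)
  rw [getD' _ h1, getD' _ h2, List.getElem_rotate]

lemma getD_take (l : List ℕ) {t i : ℕ} (h : i < t) (h2 : i < l.length) :
    (l.take t).getD i 0 = l.getD i 0 := by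
  have h1 : i < (l.take t).length := by simp; omega
  rw [getD' _ h1, getD' _ h2, List.getElem_take]

/-- The list data of a cycle. -/
def CycL (C : Multigraph) (vs es : List ℕ) : Prop :=
  vs.Nodup ∧ es.Nodup ∧ es ≠ [] ∧ vs.length = es.length ∧
  C.verts = vs.toFinset ∧ C.edges = es.toFinset ∧
  ∀ i, i < es.length →
    C.ends (es.getD i 0) = s(vs.getD i 0, vs.getD ((i + 1) % vs.length) 0)

lemma CycL.rot {C : Multigraph} {vs es : List ℕ} (h : CycL C vs es) (r : ℕ) :
    CycL C (vs.rotate r) (es.rotate r) := by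
  obtain ⟨h1, h2, h3, h4, h5, h6, h7⟩ := h
  have hn : 0 < vs.length := by
    rw [h4]; exact List.length_pos_iff.2 h3
  have hne : es.rotate r ≠ [] := by
    intro he
    have := congrArg List.length he
    simp at this
    exact h3 this
  refine ⟨List.nodup_rotate.2 h1, List.nodup_rotate.2 h2, hne, by simp [h4],
    by rw [h5]; exact (List.toFinset_eq_of_perm _ _ (vs.rotate_perm r)).symm,
    by rw [h6]; exact (List.toFinset_eq_of_perm _ _ (es.rotate_perm r)).symm, ?_⟩
  intro i hi
  have hi' : i < es.length := by simpa using hi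
  have hiv : i < vs.length := by omega
  have hmlt : (i + r) % es.length < es.length := Nat.mod_lt _ (by omega)
  rw [getD_rotate es r hi']
  rw [h7 _ hmlt]
  have hv1 : (vs.rotate r).getD i 0 = vs.getD ((i + r) % vs.length) 0 := getD_rotate vs r hiv
  have hlr : (vs.rotate r).length = vs.length := List.length_rotate vs r
  have hi1 : (i + 1) % (vs.rotate r).length < (vs.rotate r).length := by
    rw [hlr]; exact Nat.mod_lt _ (by omega)
  have hv2 : (vs.rotate r).getD ((i + 1) % (vs.rotate r).length) 0
      = vs.getD (((i + 1) % vs.length + r) % vs.length) 0 := by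
    rw [getD_rotate vs r (by rw [← hlr]; exact hi1)]
    rw [hlr]
  rw [hv1, hv2]
  have harith : ((i + r) % vs.length + 1) % vs.length
      = ((i + 1) % vs.length + r) % vs.length := by
    rw [Nat.mod_add_mod, Nat.mod_add_mod, Nat.add_right_comm]
  rw [h4] at harith ⊢
  rw [harith]

lemma key (G : Multigraph) (S : Finset ℕ) (H W : Multigraph)
    (hW : IsSCycleSubdivision G S H W) (C : Multigraph) (hCsub : C.IsSubgraph G)
    (u f : List ℕ) (hC : CycL C u f) (m p : ℕ)
    (hm2 : 2 ≤ m) (hmn : m < u.length)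
    (h0W : u.getD 0 0 ∈ W.verts) (hmW : u.getD m 0 ∈ W.verts)
    (hint : ∀ t, 0 < t → t < m → u.getD t 0 ∉ W.verts)
    (hp0 : 0 < p) (hpm : p < m) (hsS : u.getD p 0 ∈ S) :
    ∃ X : Multigraph, IsWExtension G S W X ∧ X.verts ⊆ C.verts := by
  obtain ⟨hu, hf, hfne, hlen, hCv, hCe, hends⟩ := hC
  have hfn : f.length = u.length := hlen.symm
  set n := u.length with hn
  have hCG : ∀ e ∈ C.edges, C.ends e = G.ends e := hCsub.2.2
  have hfe : ∀ i, i < m → f.getD i 0 ∈ C.edges := by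
    intro i hi; rw [hCe]; exact getD_mem (by omega)
  have hendsG : ∀ i, i < m → G.ends (f.getD i 0) = s(u.getD i 0, u.getD (i + 1) 0) := by
    intro i hi
    have h1 : i < f.length := by omega
    have h2 := hends i h1
    rw [hCG _ (hfe i hi)] at h2
    rw [h2]
    congr 2
    rw [Nat.mod_eq_of_lt (by omega)]
  have uinj : ∀ {a b : ℕ}, a < n → b < n → u.getD a 0 = u.getD b 0 → a = b :=
    fun ha hb he => getD_inj hu ha hb he
  have finj : ∀ {a b : ℕ}, a < n → b < n → f.getD a 0 = f.getD b 0 → a = b :=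
    fun ha hb he => getD_inj hf (by omega) (by omega) he
  set pvs := u.take (m + 1) with hpvs
  set pes := f.take m with hpes
  have hpvlen : pvs.length = m + 1 := by rw [hpvs]; simp; omega
  have hpelen : pes.length = m := by rw [hpes]; simp; omega
  have hpvget : ∀ {i : ℕ}, i ≤ m → pvs.getD i 0 = u.getD i 0 := by
    intro i hi; exact getD_take u (by omega) (by omega)
  have hpeget : ∀ {i : ℕ}, i < m → pes.getD i 0 = f.getD i 0 := by
    intro i hi; exact getD_take f (by omega) (by omega)
  have hpvmem : ∀ x ∈ pvs.toFinset, ∃ i, i ≤ m ∧ u.getD i 0 = x := by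
    intro x hx
    rcases exists_getD hx with ⟨i, hi, he⟩
    rw [hpvlen] at hi
    exact ⟨i, by omega, by rw [← hpvget (show i ≤ m by omega)]; exact he⟩
  have hpemem : ∀ e ∈ pes.toFinset, ∃ i, i < m ∧ f.getD i 0 = e := by
    intro e he
    rcases exists_getD he with ⟨i, hi, he'⟩
    rw [hpelen] at hi
    exact ⟨i, hi, by rw [← hpeget hi]; exact he'⟩
  have hupv : ∀ {i : ℕ}, i ≤ m → u.getD i 0 ∈ pvs.toFinset := by
    intro i hi
    rw [← hpvget hi]
    exact getD_mem (by omega)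
  have hPmem : ∀ e ∈ pes.toFinset, ∀ x ∈ G.ends e, x ∈ pvs.toFinset := by
    intro e he x hx
    rcases hpemem e he with ⟨i, hi, hie⟩
    rw [← hie, hendsG i hi, Sym2.mem_iff] at hx
    rcases hx with h | h
    · rw [h]; exact hupv (by omega)
    · rw [h]; exact hupv (by omega)
  set P : Multigraph := ⟨pvs.toFinset, pes.toFinset, G.ends, hPmem⟩ with hP
  have hPnW : ∀ i, i < m → f.getD i 0 ∉ W.edges := by
    intro i hi hmem
    have hWend : W.ends (f.getD i 0) = G.ends (f.getD i 0) := hW.1.2.2 _ hmem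
    rcases Nat.eq_zero_or_pos i with h0 | h0
    · subst h0
      have hv : u.getD 1 0 ∈ W.verts := by
        refine W.ends_mem _ hmem _ ?_
        rw [hWend, hendsG 0 hi, Sym2.mem_iff]
        right; rfl
      exact hint 1 one_pos (by omega) hv
    · have hv : u.getD i 0 ∈ W.verts := by
        refine W.ends_mem _ hmem _ ?_
        rw [hWend, hendsG i hi, Sym2.mem_iff]
        left; rfl
      exact hint i h0 hi hv
  have hpvC : pvs.toFinset ⊆ C.verts := by
    intro x hx
    rcases hpvmem x hx with ⟨i, hi, he⟩
    rw [hCv, ← he]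
    exact getD_mem (by omega)
  have hpeC : pes.toFinset ⊆ C.edges := by
    intro e he
    rcases hpemem e he with ⟨i, hi, he'⟩
    rw [← he']
    exact hfe i hi
  have hPsub : P.IsSubgraph G := ⟨hpvC.trans hCsub.1, hpeC.trans hCsub.2.1, fun e _ => rfl⟩
  have hpath : IsPathGraph P pvs pes := by
    refine ⟨(List.take_sublist _ _).nodup hu, (List.take_sublist _ _).nodup hf,
      by rw [hpvlen, hpelen], rfl, rfl, ?_⟩
    intro i hi
    rw [hpelen] at hi
    show G.ends (pes.getD i 0) = _
    rw [hpeget hi, hpvget (show i ≤ m by omega), hpvget (show i + 1 ≤ m by omega)]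
    exact hendsG i hi
  have hwpl : IsWPathList G W P pvs pes := by
    refine ⟨hPsub, hpath, ?_, ?_, ?_, ?_, ?_⟩
    · intro h
      rw [h] at hpelen
      simp at hpelen
      omega
    · rw [hpvget (show 0 ≤ m by omega)]; exact h0W
    · have hl : pvs.length - 1 = m := by omega
      rw [hl, hpvget (le_refl m)]; exact hmW
    · intro i hi0 him
      rw [hpvlen] at him
      rw [hpvget (show i ≤ m by omega)]
      exact hint i hi0 (by omega)
    · intro e he
      rcases hpemem e (List.mem_toFinset.2 he) with ⟨i, hi, hie⟩
      rw [← hie]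
      exact hPnW i hi
  set U := W.union P with hU
  have hUedges : U.edges = W.edges ∪ pes.toFinset := rfl
  have hUendsW : ∀ e ∈ W.edges, U.ends e = W.ends e := by
    intro e he; simp [hU, Multigraph.union, he]
  have hUendsP : ∀ e, e ∉ W.edges → U.ends e = G.ends e := by
    intro e he; simp [hU, Multigraph.union, he, hP]
  have hUendsG : ∀ e ∈ U.edges, U.ends e = G.ends e := by
    intro e he
    by_cases h : e ∈ W.edges
    · rw [hUendsW e h, hW.1.2.2 e h]
    · exact hUendsP e h
  have hUsub : U.IsSubgraph G :=
    ⟨Finset.union_subset hW.1.1 hPsub.1, Finset.union_subset hW.1.2.1 hPsub.2.1, hUendsG⟩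
  have hUcyc : ∀ D, IsCycleOf U D → (D.verts ∩ S).Nonempty := by
    intro D hD
    obtain ⟨hDsub, dvs, des, hdv, hde, hdne, hdlen, hDv, hDe, hDends⟩ := hD
    set dn := des.length with hdn
    have hdvn : dvs.length = dn := hdlen
    have hdnpos : 0 < dn := List.length_pos_iff.2 hdne
    have hDend' : ∀ i, i < dn →
        D.ends (des.getD i 0) = s(dvs.getD i 0, dvs.getD ((i + 1) % dn) 0) := by
      intro i hi
      have h := hDends i hi
      rw [hdvn] at h
      exact h
    have hDG : ∀ e ∈ D.edges, D.ends e = U.ends e := hDsub.2.2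
    have hDvert : ∀ i, i < dn → dvs.getD i 0 ∈ D.verts := by
      intro i hi; rw [hDv]; exact getD_mem (by omega)
    have hDedge : ∀ i, i < dn → des.getD i 0 ∈ D.edges := by
      intro i hi; rw [hDe]; exact getD_mem (by omega)
    have hdesmem : ∀ e ∈ D.edges, ∃ i, i < dn ∧ des.getD i 0 = e := by
      intro e he
      have he' : e ∈ des.toFinset := by rw [← hDe]; exact he
      rcases exists_getD he' with ⟨i, hi, hie⟩
      exact ⟨i, hi, hie⟩
    by_cases hall : ∀ e ∈ D.edges, e ∈ W.edges
    · have hDW : IsCycleOf W D := by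
        refine ⟨⟨?_, fun e he => hall e he,
          fun e he => by rw [hDG e he, hUendsW e (hall e he)]⟩,
          dvs, des, hdv, hde, hdne, hdlen, hDv, hDe, hDends⟩
        intro x hx
        rw [hDv] at hx
        rcases exists_getD hx with ⟨i, hi, he⟩
        rw [hdvn] at hi
        have hxe : x ∈ D.ends (des.getD i 0) := by
          rw [hDend' i hi, Sym2.mem_iff]
          left; exact he.symm
        have heW : des.getD i 0 ∈ W.edges := hall _ (hDedge i hi)
        have hee : D.ends (des.getD i 0) = W.ends (des.getD i 0) := by
          rw [hDG _ (hDedge i hi), hUendsW _ heW]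
        rw [hee] at hxe
        exact W.ends_mem _ heW _ hxe
      exact hW.2.2 D hDW
    · push_neg at hall
      obtain ⟨e₀, he₀D, he₀W⟩ := hall
      have he₀P : e₀ ∈ pes.toFinset := by
        rcases Finset.mem_union.1 (hDsub.2.1 he₀D) with h | h
        · exact absurd h he₀W
        · exact h
      rcases hpemem e₀ he₀P with ⟨t₀, ht₀, he₀⟩
      have ht₀D : f.getD t₀ 0 ∈ D.edges := by rw [he₀]; exact he₀D
      have hdn2 : 2 ≤ dn := by
        by_contra hlt
        have hdn1 : dn = 1 := by omega
        rcases hdesmem _ ht₀D with ⟨i, hi, hie⟩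
        have hi0 : i = 0 := by omega
        subst hi0
        have h01 : (0 + 1) % dn = 0 := by simp [hdn1]
        have h1 := hDend' 0 (by omega)
        rw [h01, hie] at h1
        have h2 : D.ends (f.getD t₀ 0) = G.ends (f.getD t₀ 0) := by
          rw [hDG _ ht₀D, hUendsP _ (hPnW t₀ ht₀)]
        rw [h2, hendsG t₀ ht₀] at h1
        rcases Sym2.eq_iff.1 h1 with ⟨ha, hb⟩ | ⟨ha, hb⟩ <;>
        · have := uinj (show t₀ < n by omega) (show t₀ + 1 < n by omega) (ha.trans hb.symm)
          omega
      have vert_step : ∀ c, 0 < c → c < m → u.getD c 0 ∈ D.verts →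
          f.getD (c - 1) 0 ∈ D.edges ∧ f.getD c 0 ∈ D.edges := by
        intro c hc0 hcm hcD
        rw [hDv] at hcD
        rcases exists_getD hcD with ⟨i, hi, hie⟩
        rw [hdvn] at hi
        set i' := (i + dn - 1) % dn with hi'
        have hi'lt : i' < dn := Nat.mod_lt _ (by omega)
        have hi'val : i' = if i = 0 then dn - 1 else i - 1 := by
          rw [hi']
          rcases Nat.eq_zero_or_pos i with h | h
          · rw [if_pos h, h]
            have he0 : (0 + dn - 1) = dn - 1 := by omega
            rw [he0]
            exact Nat.mod_eq_of_lt (by omega)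
          · rw [if_neg (by omega)]
            have he : i + dn - 1 = (i - 1) + dn := by omega
            rw [he, Nat.add_mod_right]
            exact Nat.mod_eq_of_lt (by omega)
        have hi'ne : i' ≠ i := by
          rw [hi'val]
          split_ifs with h <;> omega
        have hstep : (i' + 1) % dn = i := by
          rw [hi'val]
          split_ifs with h
          · have he : dn - 1 + 1 = dn := by omega
            rw [he, Nat.mod_self, h]
          · have he : i - 1 + 1 = i := by omega
            rw [he]
            exact Nat.mod_eq_of_lt hi
        have haD := hDedge i' hi'lt
        have hbD := hDedge i hi
        have hxa : u.getD c 0 ∈ D.ends (des.getD i' 0) := by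
          rw [hDend' i' hi'lt, hstep, Sym2.mem_iff]
          right; exact hie.symm
        have hxb : u.getD c 0 ∈ D.ends (des.getD i 0) := by
          rw [hDend' i hi, Sym2.mem_iff]
          left; exact hie.symm
        have hab : des.getD i' 0 ≠ des.getD i 0 :=
          fun h => hi'ne (getD_inj hde (by omega) (by omega) h)
        have hloc : ∀ j, j < dn → u.getD c 0 ∈ D.ends (des.getD j 0) →
            des.getD j 0 = f.getD (c - 1) 0 ∨ des.getD j 0 = f.getD c 0 := by
          intro j hj hmem
          have hjD := hDedge j hj
          have hjW : des.getD j 0 ∉ W.edges := by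
            intro hW'
            have hee : D.ends (des.getD j 0) = W.ends (des.getD j 0) := by
              rw [hDG _ hjD, hUendsW _ hW']
            rw [hee] at hmem
            exact hint c hc0 hcm (W.ends_mem _ hW' _ hmem)
          have hjP : des.getD j 0 ∈ pes.toFinset := by
            rcases Finset.mem_union.1 (hDsub.2.1 hjD) with h | h
            · exact absurd h hjW
            · exact h
          rcases hpemem _ hjP with ⟨t, ht, hte⟩
          have hee : D.ends (des.getD j 0) = G.ends (des.getD j 0) := by
            rw [hDG _ hjD, hUendsP _ hjW]
          rw [hee, ← hte, hendsG t ht, Sym2.mem_iff] at hmem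
          rcases hmem with h | h
          · have hct : c = t := uinj (by omega) (by omega) h
            right; rw [← hte, hct]
          · have hct : c = t + 1 := uinj (by omega) (by omega) h
            left; rw [← hte]
            congr 1
            omega
        have ha := hloc i' hi'lt hxa
        have hb := hloc i hi hxb
        rcases ha with ha | ha <;> rcases hb with hb | hb
        · exact absurd (ha.trans hb.symm) hab
        · exact ⟨ha ▸ haD, hb ▸ hbD⟩
        · exact ⟨hb ▸ hbD, ha ▸ haD⟩
        · exact absurd (ha.trans hb.symm) hab
      have edge_vert : ∀ t, t < m → f.getD t 0 ∈ D.edges →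
          u.getD t 0 ∈ D.verts ∧ u.getD (t + 1) 0 ∈ D.verts := by
        intro t ht htD
        rcases hdesmem _ htD with ⟨i, hi, hie⟩
        have h1 := hDend' i hi
        rw [hie] at h1
        have h2 : D.ends (f.getD t 0) = G.ends (f.getD t 0) := by
          rw [hDG _ htD, hUendsP _ (hPnW t ht)]
        rw [h2, hendsG t ht] at h1
        rcases Sym2.eq_iff.1 h1 with ⟨h3, h4⟩ | ⟨h3, h4⟩
        · exact ⟨by rw [h3]; exact hDvert i hi,
            by rw [h4]; exact hDvert _ (Nat.mod_lt _ (by omega))⟩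
        · exact ⟨by rw [h3]; exact hDvert _ (Nat.mod_lt _ (by omega)),
            by rw [h4]; exact hDvert i hi⟩
      have up : ∀ d t, t + d < m → f.getD t 0 ∈ D.edges → f.getD (t + d) 0 ∈ D.edges := by
        intro d
        induction d with
        | zero => intro t _ h; simpa using h
        | succ d ih =>
          intro t ht h
          have h1 : f.getD (t + d) 0 ∈ D.edges := ih t (by omega) h
          have h2 := (edge_vert (t + d) (by omega) h1).2
          have h3 := (vert_step (t + d + 1) (by omega) (by omega) h2).2
          have he : t + (d + 1) = t + d + 1 := by omega
          rw [he]
          exact h3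
      have down : ∀ d t, d ≤ t → t < m → f.getD t 0 ∈ D.edges →
          f.getD (t - d) 0 ∈ D.edges := by
        intro d
        induction d with
        | zero => intro t _ _ h; simpa using h
        | succ d ih =>
          intro t hd ht h
          have h1 : f.getD (t - d) 0 ∈ D.edges := ih t (by omega) ht h
          have h2 := (edge_vert (t - d) (by omega) h1).1
          have h3 := (vert_step (t - d) (by omega) (by omega) h2).1
          have he : t - (d + 1) = t - d - 1 := by omega
          rw [he]
          exact h3
      rcases Nat.lt_or_ge t₀ p with hcase | hcase
      · have h1 : f.getD (t₀ + (p - 1 - t₀)) 0 ∈ D.edges := up _ t₀ (by omega) ht₀D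
        have heq : t₀ + (p - 1 - t₀) = p - 1 := by omega
        rw [heq] at h1
        have h2 := (edge_vert (p - 1) (by omega) h1).2
        have he : p - 1 + 1 = p := by omega
        rw [he] at h2
        exact ⟨u.getD p 0, Finset.mem_inter.2 ⟨h2, hsS⟩⟩
      · have h1 : f.getD (t₀ - (t₀ - p)) 0 ∈ D.edges := down _ t₀ (by omega) (by omega) ht₀D
        have heq : t₀ - (t₀ - p) = p := by omega
        rw [heq] at h1
        exact ⟨u.getD p 0, Finset.mem_inter.2 ⟨(edge_vert p (by omega) h1).1, hsS⟩⟩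
  exact ⟨P, ⟨⟨pvs, pes, hwpl⟩, hUsub, hUcyc⟩, hpvC⟩


end CycProof

open Multigraph in
/-- Let `(G, S)` be a rooted graph with `μ(G, S) ≤ 1` containing an S-cycle
`H`-subdivision `W` for some graph `H`, and let `T ⊆ V(W)` be such that `G − T` has no
S-cycle intersecting `W` in at most one vertex, and no `W`-extension avoiding `T`
exists.  If `G − T` has no S-cycle containing a vertex of `S ∩ V(W)`, then `T` is an
S-cycle hitting set of `G`. -/
theorem hitting_set_of_no_scycle_through_W
    (G : Multigraph) (S : Finset ℕ) (hS : S ⊆ G.verts) (hmu : MuLeOne G S)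
    (H W : Multigraph) (hW : IsSCycleSubdivision G S H W)
    (T : Finset ℕ) (hT : T ⊆ W.verts)
    (h1 : ∀ C, IsSCycle (G.deleteVerts T) S C → ¬ (C.verts ∩ W.verts).card ≤ 1)
    (h2 : ¬ ∃ X, IsWExtension G S W X ∧ Disjoint X.verts T)
    (h3 : ¬ ∃ C, IsSCycle (G.deleteVerts T) S C ∧ ∃ x ∈ C.verts, x ∈ S ∩ W.verts) :
    IsHittingSet G S T := by
  constructor
  · exact fun x hx => hW.1.1 (hT hx)
  · intro C hC
    by_contra hne
    have hdisjT : ∀ x ∈ C.verts, x ∉ T :=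
      fun x hx ht => hne ⟨x, Finset.mem_inter.2 ⟨hx, ht⟩⟩
    obtain ⟨⟨hCsub, vs, es, h1', h2', h3', h4', h5', h6', h7'⟩, hCS⟩ := hC
    have hcl : CycProof.CycL C vs es := ⟨h1', h2', h3', h4', h5', h6', h7'⟩
    have hCends : ∀ e ∈ C.edges, C.ends e = G.ends e := hCsub.2.2
    have hendmem : ∀ e ∈ C.edges, ∀ x ∈ G.ends e, x ∈ C.verts := by
      intro e he x hx
      rw [← hCends e he] at hx
      exact C.ends_mem e he x hx
    have hCdel : IsSCycle (G.deleteVerts T) S C := by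
      refine ⟨⟨⟨?_, ?_, fun e he => hCends e he⟩,
        vs, es, h1', h2', h3', h4', h5', h6', h7'⟩, hCS⟩
      · intro x hx
        exact Finset.mem_sdiff.2 ⟨hCsub.1 hx, hdisjT x hx⟩
      · intro e he
        exact Finset.mem_filter.2 ⟨hCsub.2.1 he, fun x hx => hdisjT x (hendmem e he x hx)⟩
    have hcard := h1 C hCdel
    have hcard2 : 2 ≤ (C.verts ∩ W.verts).card := by omega
    have hnotSW : ∀ x ∈ C.verts, x ∉ S ∩ W.verts := by
      intro x hx hmem
      exact h3 ⟨C, hCdel, x, hx, hmem⟩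
    obtain ⟨s, hs⟩ := hCS
    have hsC : s ∈ C.verts := (Finset.mem_inter.1 hs).1
    have hsS : s ∈ S := (Finset.mem_inter.1 hs).2
    have hsW : s ∉ W.verts := fun h => hnotSW s hsC (Finset.mem_inter.2 ⟨hsS, h⟩)
    have hsvs : s ∈ vs.toFinset := by rw [← h5']; exact hsC
    rcases CycProof.exists_getD hsvs with ⟨r, hr, hrs⟩
    have hcl1 : CycProof.CycL C (vs.rotate r) (es.rotate r) := hcl.rot r
    set u1 := vs.rotate r with hu1d
    set f1 := es.rotate r with hf1d
    have hn1 : u1.length = vs.length := List.length_rotate vs r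
    set n := u1.length with hn
    have hnpos : 0 < n := by omega
    have hu1s : u1.getD 0 0 = s := by
      rw [hu1d, CycProof.getD_rotate vs r (show 0 < vs.length by omega),
        Nat.zero_add, Nat.mod_eq_of_lt hr]
      exact hrs
    have hCv1 : C.verts = u1.toFinset := hcl1.2.2.2.2.1
    set I : Finset ℕ := (Finset.range n).filter (fun i => u1.getD i 0 ∈ W.verts) with hI
    have hmemI : ∀ i, i ∈ I ↔ i < n ∧ u1.getD i 0 ∈ W.verts := by
      intro i
      rw [hI]
      simp [Finset.mem_filter, Finset.mem_range]
    have hIcard : 2 ≤ I.card := by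
      have hsub : C.verts ∩ W.verts ⊆ I.image (fun i => u1.getD i 0) := by
        intro x hx
        have hx1 : x ∈ u1.toFinset := by rw [← hCv1]; exact (Finset.mem_inter.1 hx).1
        rcases CycProof.exists_getD hx1 with ⟨i, hi, hie⟩
        refine Finset.mem_image.2 ⟨i, (hmemI i).2 ⟨by omega, by rw [hie]; exact (Finset.mem_inter.1 hx).2⟩, hie⟩
      calc 2 ≤ (C.verts ∩ W.verts).card := hcard2
        _ ≤ (I.image (fun i => u1.getD i 0)).card := Finset.card_le_card hsub
        _ ≤ I.card := Finset.card_image_le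
    have hIne : I.Nonempty := Finset.card_pos.1 (by omega)
    set j := I.min' hIne with hjd
    set k := I.max' hIne with hkd
    have hjI : j ∈ I := I.min'_mem hIne
    have hkI : k ∈ I := I.max'_mem hIne
    have hjk : j < k := I.min'_lt_max'_of_card (by omega)
    have h0I : (0 : ℕ) ∉ I := by
      intro h
      exact hsW (by rw [← hu1s]; exact ((hmemI 0).1 h).2)
    have hj0 : 0 < j := by
      rcases Nat.eq_zero_or_pos j with h | h
      · rw [h] at hjI
        exact absurd hjI h0I
      · exact h
    have hkn : k < n := ((hmemI k).1 hkI).1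
    have hjn : j < n := by omega
    have hcl2 : CycProof.CycL C (u1.rotate k) (f1.rotate k) := hcl1.rot k
    set u := u1.rotate k with hud
    have hulen : u.length = n := List.length_rotate u1 k
    have hgu : ∀ i : ℕ, i < n → u.getD i 0 = u1.getD ((i + k) % n) 0 := by
      intro i hi
      rw [hud]
      exact CycProof.getD_rotate u1 k (by omega)
    have h0W' : u.getD 0 0 ∈ W.verts := by
      rw [hgu 0 (by omega), Nat.zero_add, Nat.mod_eq_of_lt hkn]
      exact ((hmemI k).1 hkI).2
    have hmW' : u.getD (n - k + j) 0 ∈ W.verts := by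
      rw [hgu _ (by omega)]
      have harith : (n - k + j + k) % n = j := by
        have he : n - k + j + k = n + j := by omega
        rw [he, Nat.add_mod_left]
        exact Nat.mod_eq_of_lt hjn
      rw [harith]
      exact ((hmemI j).1 hjI).2
    have hpW : u.getD (n - k) 0 = s := by
      rw [hgu _ (by omega)]
      have harith : (n - k + k) % n = 0 := by
        have he : n - k + k = n := by omega
        rw [he, Nat.mod_self]
      rw [harith]
      exact hu1s
    have hintr : ∀ t, 0 < t → t < n - k + j → u.getD t 0 ∉ W.verts := by
      intro t ht0 htm
      rw [hgu t (by omega)]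
      intro hmem
      rcases Nat.lt_or_ge (t + k) n with hc | hc
      · rw [Nat.mod_eq_of_lt hc] at hmem
        have hin : t + k ∈ I := (hmemI _).2 ⟨hc, hmem⟩
        have := I.le_max' _ hin
        omega
      · have hval : (t + k) % n = t + k - n := by
          rw [Nat.mod_eq_sub_mod hc]
          exact Nat.mod_eq_of_lt (by omega)
        rw [hval] at hmem
        rcases Nat.eq_zero_or_pos (t + k - n) with h | h
        · rw [h, hu1s] at hmem
          exact hsW hmem
        · have hin : t + k - n ∈ I := (hmemI _).2 ⟨by omega, hmem⟩
          have := I.min'_le _ hin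
          omega
    obtain ⟨X, hXext, hXsub⟩ := CycProof.key G S H W hW C hCsub u (f1.rotate k) hcl2
      (n - k + j) (n - k) (by omega) (by omega) h0W' hmW' hintr (by omega) (by omega)
      (by rw [hpW]; exact hsS)
    exact h2 ⟨X, hXext, Finset.disjoint_left.2 fun {x} hx => hdisjT x (hXsub hx)⟩
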